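/- Let G be a finite abelian group of exponent N. Every sequence (g_k), k = 1, ..., |G|, of |G| elements of G contains a nonempty subset K of {1, ..., |G|} with |K| ≤ N such that ∑_{k ∈ K} g_k = 0_G. -/

import Mathlib

open Finset

section Aux

variable {G : Type*} [AddCommGroup G]

/-- Prefix-sum pigeonhole: if at least `card C` indexed elements all lie in a
subgroup `C`, some nonempty sub-Finset has zero sum. -/
lemma block_lemma {ι : Type*} [DecidableEq ι] (g : ι → G)
    (I : Finset ι) (C : AddSubgroup G) [Fintype C]
    (hmem : ∀ i ∈ I, g i ∈ C) (hcard : Fintype.card C ≤ I.card) :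
    ∃ K ⊆ I, K.Nonempty ∧ ∑ k ∈ K, g k = 0 := by
  classical
  set c := Fintype.card C with hc
  set e := I.equivFin with he
  have hmem' : ∀ j : Fin (c+1),
      (∑ k ∈ Finset.univ.filter (fun k : Fin I.card => (k:ℕ) < (j:ℕ)), g (e.symm k)) ∈ C :=
    fun j => AddSubgroup.sum_mem _ (fun k _ => hmem _ (e.symm k).2)
  set F : Fin (c+1) → C := fun j => ⟨_, hmem' j⟩ with hF
  have hlt : Fintype.card C < Fintype.card (Fin (c+1)) := by simp [hc]
  obtain ⟨a, b, hab, hFab⟩ := Fintype.exists_ne_map_eq_of_card_lt F hlt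
  -- wlog a < b
  have main : ∀ a b : Fin (c+1), (a:ℕ) < (b:ℕ) → F a = F b →
      ∃ K ⊆ I, K.Nonempty ∧ ∑ k ∈ K, g k = 0 := by
    intro a b hlt' hEq
    set K0 : Finset (Fin I.card) :=
      Finset.univ.filter (fun k => (a:ℕ) ≤ (k:ℕ) ∧ (k:ℕ) < (b:ℕ)) with hK0
    set K : Finset ι := K0.image (fun k => ((e.symm k : I) : ι)) with hK
    have hinj : Function.Injective (fun k : Fin I.card => ((e.symm k : I) : ι)) :=
      fun x y hxy => e.symm.injective (Subtype.val_injective hxy)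
    have hKI : K ⊆ I := by
      intro x hx
      simp only [hK, Finset.mem_image] at hx
      obtain ⟨k, _, rfl⟩ := hx
      exact (e.symm k).2
    have haI : (a:ℕ) < I.card := lt_of_lt_of_le hlt' (le_trans (Nat.lt_succ_iff.mp b.2) hcard)
    have hne : K.Nonempty := by
      refine ⟨((e.symm ⟨(a:ℕ), haI⟩ : I) : ι), ?_⟩
      simp only [hK, Finset.mem_image]
      exact ⟨⟨(a:ℕ), haI⟩, by simp [hK0]; omega, rfl⟩
    have hsum : ∑ k ∈ K, g k = ∑ k ∈ K0, g (e.symm k) :=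
      Finset.sum_image (fun x _ y _ h => hinj h)
    have hsplit :
        (Finset.univ.filter (fun k : Fin I.card => (k:ℕ) < (b:ℕ)))
          = (Finset.univ.filter (fun k : Fin I.card => (k:ℕ) < (a:ℕ))) ∪ K0 := by
      ext k
      simp only [Finset.mem_filter, Finset.mem_union, Finset.mem_univ, true_and, hK0]
      omega
    have hdisj : Disjoint (Finset.univ.filter (fun k : Fin I.card => (k:ℕ) < (a:ℕ))) K0 := by
      rw [Finset.disjoint_left]
      intro k hk hk'
      simp only [Finset.mem_filter, Finset.mem_univ, true_and, hK0] at hk hk'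
      omega
    have hEq' : (F a : G) = (F b : G) := by rw [hEq]
    simp only [hF] at hEq'
    rw [hsplit, Finset.sum_union hdisj] at hEq'
    have hzero : ∑ k ∈ K0, g (e.symm k) = 0 := left_eq_add.mp hEq'
    exact ⟨K, hKI, hne, by rw [hsum]; exact hzero⟩
  rcases Ne.lt_or_gt hab with h | h
  · exact main a b h hFab
  · exact main b a h hFab.symm

end Aux

section Aux2
variable {G : Type*} [AddCommGroup G]

lemma extract_lemma {ι : Type*} [DecidableEq ι] (g : ι → G) (H : AddSubgroup G)
    (P q : ℕ)
    (hstep : ∀ R : Finset ι, P ≤ R.card →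
      ∃ B, B ⊆ R ∧ B.Nonempty ∧ B.card ≤ q ∧ (∑ k ∈ B, g k) ∈ H)
    (R : Finset ι) :
    ∃ L : List (Finset ι),
      (∀ B ∈ L, B ⊆ R ∧ B.Nonempty ∧ B.card ≤ q ∧ (∑ k ∈ B, g k) ∈ H) ∧
      L.Pairwise Disjoint ∧ R.card < q * L.length + P := by
  classical
  induction R using Finset.strongInduction with
  | _ R ih =>
    by_cases hR : R.card < P
    · exact ⟨[], by simp, by simp, by simpa using hR⟩
    · push_neg at hR
      obtain ⟨B, hBR, hBne, hBq, hBH⟩ := hstep R hR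
      obtain ⟨L', hL'cond, hL'pw, hL'count⟩ := ih (R \ B) (Finset.sdiff_ssubset hBR hBne)
      refine ⟨B :: L', ?_, ?_, ?_⟩
      · intro B' hB'
        rcases List.mem_cons.mp hB' with rfl | hB'
        · exact ⟨hBR, hBne, hBq, hBH⟩
        · obtain ⟨h1, h2, h3, h4⟩ := hL'cond B' hB'
          exact ⟨h1.trans (Finset.sdiff_subset), h2, h3, h4⟩
      · refine List.Pairwise.cons ?_ hL'pw
        intro B' hB'
        rw [Finset.disjoint_left]
        intro x hxB hxB'
        have := (hL'cond B' hB').1 hxB'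
        simp only [Finset.mem_sdiff] at this
        exact this.2 hxB
      · have hcB : (R \ B).card + B.card = R.card := Finset.card_sdiff_add_card_eq_card hBR
        have : q * (L'.length + 1) = q * L'.length + q := by ring
        simp only [List.length_cons]
        omega

end Aux2

section Aux3
variable {G : Type*} [AddCommGroup G] [Fintype G]

lemma elementary_case (p : ℕ) (hp : p.Prime)
    (hexp : AddMonoid.exponent G = p) (g : Fin (Fintype.card G) → G) :
    ∃ K : Finset (Fin (Fintype.card G)), K.Nonempty ∧ K.card ≤ p ∧ ∑ k ∈ K, g k = 0 := by
  classical
  by_cases h0 : ∃ k, g k = 0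
  · obtain ⟨k, hk⟩ := h0
    exact ⟨{k}, Finset.singleton_nonempty _, by simpa using hp.one_lt.le, by simp [hk]⟩
  push_neg at h0
  -- every nonzero element has order p
  have horder : ∀ x : G, x ≠ 0 → addOrderOf x = p := by
    intro x hx
    have hdvd : addOrderOf x ∣ p := hexp ▸ AddMonoid.addOrder_dvd_exponent x
    rcases (Nat.Prime.eq_one_or_self_of_dvd hp _ hdvd) with h | h
    · exact absurd (AddMonoid.addOrderOf_eq_one_iff.mp h) hx
    · exact h
  -- the "line" of an element, as a Finset
  set fL : Fin (Fintype.card G) → Finset G :=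
    fun k => Finset.univ.filter (fun x => x ∈ AddSubgroup.zmultiples (g k)) with hfL
  have hfilter_card : ∀ x : G, x ≠ 0 →
      (Finset.univ.filter (fun y => y ∈ AddSubgroup.zmultiples x)).card = p := by
    intro x hx
    have h1 : Fintype.card {y // y ∈ AddSubgroup.zmultiples x}
        = (Finset.univ.filter (fun y => y ∈ AddSubgroup.zmultiples x)).card :=
      Fintype.card_subtype _
    have h2 : Nat.card (AddSubgroup.zmultiples x) = addOrderOf x := Nat.card_zmultiples x
    rw [Nat.card_eq_fintype_card] at h2
    rw [← h1, h2, horder x hx]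
  have hcardL : ∀ k, (fL k).card = p := fun k => hfilter_card _ (h0 k)
  have hzeroL : ∀ k, (0:G) ∈ fL k := by
    intro k; simp [hfL, AddSubgroup.zero_mem]
  -- key: a line through a nonzero point is determined by the point
  have hline_eq : ∀ k (x : G), x ∈ fL k → x ≠ 0 →
      fL k = Finset.univ.filter (fun y => y ∈ AddSubgroup.zmultiples x) := by
    intro k x hxL hx
    have hxmem : x ∈ AddSubgroup.zmultiples (g k) := by
      simp only [hfL, Finset.mem_filter] at hxL; exact hxL.2
    have hsub : (Finset.univ.filter (fun y => y ∈ AddSubgroup.zmultiples x)) ⊆ fL k := by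
      intro y hy
      simp only [Finset.mem_filter, Finset.mem_univ, true_and, hfL] at hy ⊢
      obtain ⟨n, rfl⟩ := AddSubgroup.mem_zmultiples_iff.mp hy
      exact AddSubgroup.zsmul_mem _ hxmem n
    have := Finset.eq_of_subset_of_card_le hsub
      (by rw [hcardL k, hfilter_card x hx])
    exact this.symm
  -- pigeonhole: some line contains at least p of the terms
  set T : Finset (Finset G) := Finset.univ.image fL with hT
  have hfiber : Fintype.card G =
      ∑ L ∈ T, (Finset.univ.filter (fun k => fL k = L)).card := by
    have := Finset.card_eq_sum_card_fiberwise
      (fun k (_ : k ∈ Finset.univ) => Finset.mem_image_of_mem fL (Finset.mem_univ k))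
    simpa using this
  by_cases hbig : ∃ L ∈ T, p ≤ (Finset.univ.filter (fun k => fL k = L)).card
  · obtain ⟨L, hLT, hLbig⟩ := hbig
    obtain ⟨k0, _, hk0⟩ := Finset.mem_image.mp hLT
    obtain ⟨F', hF'sub, hF'card⟩ :=
      Finset.exists_subset_card_eq hLbig
    haveI : Fintype (AddSubgroup.zmultiples (g k0)) := Fintype.ofFinite _
    have hCcard : Fintype.card (AddSubgroup.zmultiples (g k0)) = p := by
      have h2 : Nat.card (AddSubgroup.zmultiples (g k0)) = addOrderOf (g k0) :=
        Nat.card_zmultiples _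
      rw [Nat.card_eq_fintype_card] at h2
      rw [h2, horder _ (h0 k0)]
    obtain ⟨K, hKF', hKne, hKsum⟩ := block_lemma g F' (AddSubgroup.zmultiples (g k0))
      (by
        intro i hiF'
        have hi : fL i = L := by
          have := hF'sub hiF'
          simpa using this
        have : g i ∈ fL i := by
          simp [hfL, AddSubgroup.mem_zmultiples]
        rw [hi, ← hk0] at this
        simp only [hfL, Finset.mem_filter] at this
        exact this.2)
      (by rw [hCcard, hF'card])
    exact ⟨K, hKne, by
      calc K.card ≤ F'.card := Finset.card_le_card hKF'
      _ = p := hF'card, hKsum⟩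
  · exfalso
    push_neg at hbig
    -- each fiber has ≤ p - 1 elements
    have hsum_le : Fintype.card G ≤ T.card * (p - 1) := by
      rw [hfiber]
      calc ∑ L ∈ T, (Finset.univ.filter (fun k => fL k = L)).card
          ≤ ∑ L ∈ T, (p-1) := Finset.sum_le_sum (fun L hL => by
            have := hbig L hL; omega)
        _ = T.card * (p-1) := by rw [Finset.sum_const, smul_eq_mul]
    -- but the punctured lines are disjoint subsets of G \ {0}
    have hdisjL : ∀ L ∈ T, ∀ L' ∈ T, L ≠ L' → Disjoint (L.erase 0) (L'.erase 0) := by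
      intro L hL L' hL' hne
      rw [Finset.disjoint_left]
      intro x hxL hxL'
      obtain ⟨k, _, rfl⟩ := Finset.mem_image.mp hL
      obtain ⟨k', _, rfl⟩ := Finset.mem_image.mp hL'
      have hx0 : x ≠ 0 := Finset.ne_of_mem_erase hxL
      have e1 := hline_eq k x (Finset.mem_of_mem_erase hxL) hx0
      have e2 := hline_eq k' x (Finset.mem_of_mem_erase hxL') hx0
      exact hne (e1.trans e2.symm)
    have herase_card : ∀ L ∈ T, (L.erase 0).card = p - 1 := by
      intro L hL
      obtain ⟨k, _, rfl⟩ := Finset.mem_image.mp hL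
      rw [Finset.card_erase_of_mem (hzeroL k), hcardL k]
    have hbound : T.card * (p-1) ≤ Fintype.card G - 1 := by
      have h1 : (T.biUnion (fun L => L.erase 0)).card = ∑ L ∈ T, (L.erase 0).card :=
        Finset.card_biUnion hdisjL
      have h2 : T.biUnion (fun L => L.erase 0) ⊆ Finset.univ.erase 0 := by
        intro x hx
        simp only [Finset.mem_biUnion] at hx
        obtain ⟨L, _, hxL⟩ := hx
        exact Finset.mem_erase.mpr ⟨Finset.ne_of_mem_erase hxL, Finset.mem_univ x⟩
      have h3 : (Finset.univ.erase (0:G)).card = Fintype.card G - 1 := by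
        rw [Finset.card_erase_of_mem (Finset.mem_univ 0), Finset.card_univ]
      calc T.card * (p-1) = ∑ L ∈ T, (p-1) := by rw [Finset.sum_const, smul_eq_mul]
        _ = ∑ L ∈ T, (L.erase 0).card := Finset.sum_congr rfl (fun L hL => (herase_card L hL).symm)
        _ = (T.biUnion (fun L => L.erase 0)).card := h1.symm
        _ ≤ (Finset.univ.erase (0:G)).card := Finset.card_le_card h2
        _ = Fintype.card G - 1 := h3
    have hpos : 0 < Fintype.card G := Fintype.card_pos
    omega

end Aux3

universe u

theorem zero_sum_aux : ∀ (n : ℕ) (G : Type u) [AddCommGroup G] [Fintype G],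
    Fintype.card G ≤ n → ∀ g : Fin (Fintype.card G) → G,
    ∃ K : Finset (Fin (Fintype.card G)), K.Nonempty ∧
      K.card ≤ AddMonoid.exponent G ∧ ∑ k ∈ K, g k = 0 := by
  intro n
  induction n with
  | zero =>
    intro G _ _ hle g
    exact absurd hle (by have : 0 < Fintype.card G := Fintype.card_pos; omega)
  | succ n IH =>
    intro G instG instF hle g
    classical
    set N := AddMonoid.exponent G with hN
    have hN0 : N ≠ 0 := AddMonoid.exponent_ne_zero_of_finite
    by_cases hN1 : N = 1
    · -- trivial group case
      have hall : ∀ x : G, x = 0 := by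
        intro x
        have h1 := AddMonoid.exponent_nsmul_eq_zero x
        rw [← hN, hN1, one_nsmul] at h1
        exact h1
      refine ⟨{⟨0, Fintype.card_pos⟩}, Finset.singleton_nonempty _, ?_, by simp [hall]⟩
      simp [hN1.symm ▸ (by omega : 1 ≤ 1)]
      omega
    · obtain ⟨p, hp, hpd⟩ : ∃ p, p.Prime ∧ p ∣ N :=
        ⟨N.minFac, Nat.minFac_prime hN1, N.minFac_dvd⟩
      by_cases hNp : N = p
      · obtain ⟨K, h1, h2, h3⟩ := elementary_case p hp (hN.symm.trans hNp) g
        exact ⟨K, h1, by omega, h3⟩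
      · -- the main (composite exponent) case
        obtain ⟨m, hmp⟩ : ∃ m, m * p = N := ⟨N / p, Nat.div_mul_cancel hpd⟩
        have hp2 : 2 ≤ p := hp.two_le
        have hm0 : m ≠ 0 := by rintro rfl; rw [zero_mul] at hmp; exact hN0 hmp.symm
        have hm1 : m ≠ 1 := by rintro rfl; rw [one_mul] at hmp; exact hNp hmp.symm
        have hm2 : 2 ≤ m := by omega
        have hmN : m < N := by
          have h2m : m * 2 ≤ m * p := Nat.mul_le_mul_left m hp2
          have hmm : m * 2 = m + m := by ring
          omega
        -- the subgroup H = {x | m • x = 0}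
        set H : AddSubgroup G :=
          { carrier := {x | m • x = 0}
            zero_mem' := by simp
            add_mem' := by
              intro a b ha hb
              simp only [Set.mem_setOf_eq, smul_add] at *
              rw [ha, hb, add_zero]
            neg_mem' := by
              intro a ha
              simp only [Set.mem_setOf_eq, smul_neg] at *
              rw [ha, neg_zero] } with hH
        have hHmem : ∀ x : G, x ∈ H ↔ m • x = 0 := fun x => Iff.rfl
        letI : Fintype (G ⧸ H) := Fintype.ofFinite _
        letI : Fintype H := Fintype.ofFinite _
        set P := Fintype.card (G ⧸ H) with hP
        -- every element of the quotient is killed by p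
        have hQp : ∀ x : G ⧸ H, p • x = 0 := by
          intro x
          induction x using QuotientAddGroup.induction_on with
          | H x =>
            have h1 : (p • x : G) ∈ H := by
              rw [hHmem, smul_smul, hmp, hN]
              exact AddMonoid.exponent_nsmul_eq_zero x
            have h2 : ((p • x : G) : G ⧸ H) = 0 := (QuotientAddGroup.eq_zero_iff _).mpr h1
            rw [← h2]
            exact (QuotientAddGroup.mk_nsmul H x p)
        have hexpQ_dvd : AddMonoid.exponent (G ⧸ H) ∣ p :=
          AddMonoid.exponent_dvd_iff_forall_nsmul_eq_zero.mpr hQp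
        -- the quotient is nontrivial
        obtain ⟨x0, hx0⟩ : ∃ x : G, m • x ≠ 0 := by
          by_contra hc
          push_neg at hc
          have : N ∣ m := by
            rw [hN]; exact AddMonoid.exponent_dvd_iff_forall_nsmul_eq_zero.mpr hc
          have := Nat.le_of_dvd (by omega) this
          omega
        have hx0Q : (x0 : G ⧸ H) ≠ 0 := by
          rw [Ne, QuotientAddGroup.eq_zero_iff, hHmem]
          exact hx0
        have hexpQ : AddMonoid.exponent (G ⧸ H) = p := by
          rcases (Nat.Prime.eq_one_or_self_of_dvd hp _ hexpQ_dvd) with h | h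
          · exfalso
            apply hx0Q
            have h1 := AddMonoid.exponent_nsmul_eq_zero (x0 : G ⧸ H)
            rw [h, one_nsmul] at h1
            exact h1
          · exact h
        -- p ≤ P
        have hPp : p ≤ P := by
          have h1 : AddMonoid.exponent (G ⧸ H) ∣ P :=
            AddMonoid.exponent_dvd_iff_forall_nsmul_eq_zero.mpr (fun x => card_nsmul_eq_zero)
          have h2 : 0 < P := Fintype.card_pos
          rw [← hexpQ]
          exact Nat.le_of_dvd h2 h1
        -- card G = P * card H
        have hcards : Fintype.card G = P * Fintype.card H := by
          have := AddSubgroup.card_eq_card_quotient_mul_card_addSubgroup H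
          simpa [Nat.card_eq_fintype_card] using this
        -- H is nontrivial (Cauchy)
        have hH2 : 2 ≤ Fintype.card H := by
          obtain ⟨q0, hq0, hq0d⟩ : ∃ q0, q0.Prime ∧ q0 ∣ m :=
            ⟨m.minFac, Nat.minFac_prime hm1, m.minFac_dvd⟩
          have hNdvd : N ∣ Fintype.card G := by
            rw [hN]
            exact AddMonoid.exponent_dvd_iff_forall_nsmul_eq_zero.mpr
              (fun x => card_nsmul_eq_zero)
          have hq0G : q0 ∣ Fintype.card G :=
            dvd_trans (dvd_trans hq0d ⟨p, hmp.symm⟩) hNdvd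
          haveI : Fact q0.Prime := ⟨hq0⟩
          obtain ⟨x, hx⟩ := exists_prime_addOrderOf_dvd_card q0 hq0G
          have hxH : x ∈ H := by
            rw [hHmem, ← addOrderOf_dvd_iff_nsmul_eq_zero, hx]
            exact hq0d
          have hxne : x ≠ 0 := by
            rintro rfl
            rw [addOrderOf_zero] at hx
            exact hq0.one_lt.ne' hx.symm
          exact Fintype.one_lt_card_iff_nontrivial.mpr
            ⟨⟨x, hxH⟩, 0, by simp [Subtype.ext_iff, hxne]⟩
        -- cards are small enough for the induction hypothesis
        have hQle : Fintype.card (G ⧸ H) ≤ n := by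
          have l1 : 2 * P ≤ Fintype.card G := by
            calc 2 * P = P * 2 := by ring
            _ ≤ P * Fintype.card H := Nat.mul_le_mul_left P hH2
            _ = Fintype.card G := hcards.symm
          rw [← hP]
          omega
        have hHle : Fintype.card H ≤ n := by
          have l1 : 2 * Fintype.card H ≤ Fintype.card G := by
            calc 2 * Fintype.card H ≤ P * Fintype.card H :=
              Nat.mul_le_mul_right _ (by omega)
            _ = Fintype.card G := hcards.symm
          omega
        -- extraction step from the quotient
        have hstep : ∀ R : Finset (Fin (Fintype.card G)), P ≤ R.card →
            ∃ B, B ⊆ R ∧ B.Nonempty ∧ B.card ≤ p ∧ (∑ k ∈ B, g k) ∈ H := by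
          intro R hR
          obtain ⟨S, hSR, hScard⟩ := Finset.exists_subset_card_eq hR
          set eS := S.equivFin with heS
          set emb : Fin P → Fin (Fintype.card G) :=
            fun j => ((eS.symm (Fin.cast hScard.symm j)) : Fin (Fintype.card G)) with hemb
          have hembInj : Function.Injective emb := by
            intro a b hab
            have := eS.symm.injective (Subtype.val_injective hab)
            exact Fin.cast_injective _ this
          have hembS : ∀ j, emb j ∈ S := fun j => (eS.symm (Fin.cast hScard.symm j)).2
          set g' : Fin (Fintype.card (G ⧸ H)) → (G ⧸ H) :=
            fun j => (QuotientAddGroup.mk' H) (g (emb j)) with hg'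
          obtain ⟨K', hK'ne, hK'card, hK'sum⟩ := IH (G ⧸ H) hQle g'
          refine ⟨K'.image emb, ?_, hK'ne.image emb, ?_, ?_⟩
          · intro x hx
            obtain ⟨j, _, rfl⟩ := Finset.mem_image.mp hx
            exact hSR (hembS j)
          · rw [Finset.card_image_of_injective _ hembInj]
            calc K'.card ≤ AddMonoid.exponent (G ⧸ H) := hK'card
            _ = p := hexpQ
          · have h1 : (QuotientAddGroup.mk' H) (∑ k ∈ K'.image emb, g k) = 0 := by
              rw [Finset.sum_image (fun a _ b _ h => hembInj h), map_sum]
              exact hK'sum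
            rw [QuotientAddGroup.mk'_apply, QuotientAddGroup.eq_zero_iff] at h1
            exact h1
        -- extract blocks
        obtain ⟨L, hLcond, hLpw, hLcount⟩ := extract_lemma g H P p hstep Finset.univ
        have huniv : (Finset.univ : Finset (Fin (Fintype.card G))).card = Fintype.card G := by
          simp
        -- enough blocks
        have htH : Fintype.card H ≤ L.length := by
          by_contra hcon
          push_neg at hcon
          have h1 : Fintype.card G < p * L.length + P := by
            rw [huniv] at hLcount; exact hLcount
          have h2 : p * L.length ≤ P * L.length := Nat.mul_le_mul_right _ hPp
          have h3 : P * L.length + P = P * (L.length + 1) := by ring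
          have h4 : P * (L.length + 1) ≤ P * Fintype.card H :=
            Nat.mul_le_mul_left P (by omega)
          omega
        set L' := L.take (Fintype.card H) with hL'
        have hlen : L'.length = Fintype.card H := by
          rw [hL', List.length_take]
          exact min_eq_left htH
        have hlen' : ∀ i : Fin (Fintype.card H), (i : ℕ) < L'.length := by
          intro i; rw [hlen]; exact i.2
        set blocks : Fin (Fintype.card H) → Finset (Fin (Fintype.card G)) :=
          fun i => L'[(i : ℕ)]'(hlen' i) with hblocks
        have hblock : ∀ i, blocks i ⊆ Finset.univ ∧ (blocks i).Nonempty ∧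
            (blocks i).card ≤ p ∧ (∑ k ∈ blocks i, g k) ∈ H :=
          fun i => hLcond _ (List.take_subset _ _ (List.getElem_mem (hlen' i)))
        set h : Fin (Fintype.card H) → H :=
          fun i => ⟨∑ k ∈ blocks i, g k, (hblock i).2.2.2⟩ with hh
        obtain ⟨J, hJne, hJcard, hJsum⟩ := IH H hHle h
        have hexpH : AddMonoid.exponent H ≤ m := by
          have h1 : AddMonoid.exponent H ∣ m := by
            rw [AddMonoid.exponent_dvd_iff_forall_nsmul_eq_zero]
            intro x
            ext
            push_cast
            exact x.2
          exact Nat.le_of_dvd (by omega) h1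
        -- disjointness of the chosen blocks
        have hL'pw : L'.Pairwise Disjoint := hLpw.sublist (List.take_sublist _ _)
        have hpairs : ∀ i ∈ J, ∀ j ∈ J, i ≠ j → Disjoint (blocks i) (blocks j) := by
          intro i _ j _ hij
          have hget := List.pairwise_iff_getElem.mp hL'pw
          have hne : (i : ℕ) ≠ (j : ℕ) := fun hc => hij (Fin.val_injective hc)
          rcases Ne.lt_or_gt hne with hc | hc
          · exact hget _ _ (hlen' i) (hlen' j) hc
          · exact (hget _ _ (hlen' j) (hlen' i) hc).symm
        refine ⟨J.biUnion blocks, ?_, ?_, ?_⟩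
        · obtain ⟨i0, hi0⟩ := hJne
          obtain ⟨x, hx⟩ := (hblock i0).2.1
          exact ⟨x, Finset.mem_biUnion.mpr ⟨i0, hi0, hx⟩⟩
        · rw [Finset.card_biUnion hpairs]
          calc ∑ i ∈ J, (blocks i).card ≤ ∑ i ∈ J, p :=
              Finset.sum_le_sum (fun i _ => (hblock i).2.2.1)
          _ = J.card * p := by rw [Finset.sum_const, smul_eq_mul]
          _ ≤ m * p := Nat.mul_le_mul_right p (le_trans hJcard hexpH)
          _ = N := hmp
        · rw [Finset.sum_biUnion hpairs]
          have hinner : ∀ i ∈ J, ∑ k ∈ blocks i, g k = ((h i : H) : G) := fun i _ => rfl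
          rw [Finset.sum_congr rfl hinner]
          have h2 : ∑ x ∈ J, ((h x : G)) = H.subtype (∑ k ∈ J, h k) :=
            (map_sum H.subtype h J).symm
          rw [h2, hJsum, map_zero]

/-- Every sequence of |G| elements of a finite abelian group G contains a
nonempty zero-sum subsequence of length at most the exponent N(G). -/
theorem zero_sum_subsequence_card_le_exponent (G : Type*) [AddCommGroup G]
    [Fintype G] (g : Fin (Fintype.card G) → G) :
    ∃ K : Finset (Fin (Fintype.card G)), K.Nonempty ∧
      K.card ≤ AddMonoid.exponent G ∧ ∑ k ∈ K, g k = 0 := by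
  exact zero_sum_aux (Fintype.card G) G le_rfl g
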